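/- The (3,1)-QRAC decoding succeeds with probability 1/2 + 1/(2√3): for all (x₁,x₂,x₃) ∈ {0,1}³ and each i ∈ {1,2,3}, measuring ρ_{x₁,x₂,x₃} with the projective measurement in the X, Y, or Z eigenbasis respectively yields outcome x_i with probability 1/2 + 1/(2√3). -/

import Mathlib

open Matrix

noncomputable def PX : Matrix (Fin 2) (Fin 2) ℂ := !![0, 1; 1, 0]
noncomputable def PY : Matrix (Fin 2) (Fin 2) ℂ := !![0, -Complex.I; Complex.I, 0]
noncomputable def PZ : Matrix (Fin 2) (Fin 2) ℂ := !![1, 0; 0, -1]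

noncomputable def sgn (b : Bool) : ℂ := if b then -1 else 1

noncomputable def rho3 (x₁ x₂ x₃ : Bool) : Matrix (Fin 2) (Fin 2) ℂ :=
  ((1 : ℂ)/2) • (1 + ((1 : ℂ)/(Real.sqrt 3 : ℂ)) • (sgn x₁ • PX + sgn x₂ • PY + sgn x₃ • PZ))

noncomputable def meas (P : Matrix (Fin 2) (Fin 2) ℂ) (b : Bool) : Matrix (Fin 2) (Fin 2) ℂ :=
  ((1 : ℂ)/2) • (1 + sgn b • P)

lemma sgn_sq (b : Bool) : sgn b * sgn b = 1 := by cases b <;> simp [sgn]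

lemma trPX : PX.trace = 0 := by simp [PX, Matrix.trace_fin_two]
lemma trPY : PY.trace = 0 := by simp [PY, Matrix.trace_fin_two]
lemma trPZ : PZ.trace = 0 := by simp [PZ, Matrix.trace_fin_two]

lemma trXX : (PX * PX).trace = 2 := by
  simp [PX, Matrix.trace_fin_two, Matrix.mul_apply, Fin.sum_univ_two]
  norm_num
lemma trYY : (PY * PY).trace = 2 := by
  simp [PY, Matrix.trace_fin_two, Matrix.mul_apply, Fin.sum_univ_two, Complex.I_mul_I]
  norm_num
lemma trZZ : (PZ * PZ).trace = 2 := by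
  simp [PZ, Matrix.trace_fin_two, Matrix.mul_apply, Fin.sum_univ_two]; ring
lemma trXY : (PX * PY).trace = 0 := by
  simp [PX, PY, Matrix.trace_fin_two, Matrix.mul_apply, Fin.sum_univ_two]
lemma trXZ : (PX * PZ).trace = 0 := by
  simp [PX, PZ, Matrix.trace_fin_two, Matrix.mul_apply, Fin.sum_univ_two]
lemma trYX : (PY * PX).trace = 0 := by
  simp [PY, PX, Matrix.trace_fin_two, Matrix.mul_apply, Fin.sum_univ_two]
lemma trYZ : (PY * PZ).trace = 0 := by
  simp [PY, PZ, Matrix.trace_fin_two, Matrix.mul_apply, Fin.sum_univ_two]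
lemma trZX : (PZ * PX).trace = 0 := by
  simp [PZ, PX, Matrix.trace_fin_two, Matrix.mul_apply, Fin.sum_univ_two]
lemma trZY : (PZ * PY).trace = 0 := by
  simp [PZ, PY, Matrix.trace_fin_two, Matrix.mul_apply, Fin.sum_univ_two]

lemma key (P S : Matrix (Fin 2) (Fin 2) ℂ) (s : ℂ) (hs : s * s = 1)
    (hP : P.trace = 0) (hS : S.trace = 0) (hPS : (P * S).trace = 2 * s) :
    ((((1:ℂ)/2) • (1 + s • P)) * (((1:ℂ)/2) • (1 + ((1:ℂ)/(Real.sqrt 3 : ℂ)) • S))).trace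
      = ((1 : ℝ)/2 + 1/(2 * Real.sqrt 3) : ℝ) := by
  have h3 : (Real.sqrt 3 : ℂ) ≠ 0 := by
    simp only [ne_eq, Complex.ofReal_eq_zero]; positivity
  have h3' : Real.sqrt 3 ≠ 0 := by positivity
  have htr1 : (1 : Matrix (Fin 2) (Fin 2) ℂ).trace = 2 := by
    simp [Matrix.trace_one]
  simp only [Matrix.smul_mul, Matrix.mul_smul, Matrix.mul_add, Matrix.add_mul,
    Matrix.one_mul, Matrix.mul_one, Matrix.trace_smul, Matrix.trace_add,
    smul_eq_mul, htr1, hP, hS, hPS, mul_zero, add_zero, zero_add,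
    Complex.ofReal_add, Complex.ofReal_div, Complex.ofReal_mul, Complex.ofReal_one,
    Complex.ofReal_ofNat]
  field_simp
  linear_combination hs

lemma trS (P : Matrix (Fin 2) (Fin 2) ℂ) (a b c : ℂ)
    (hX : (P * PX).trace = a) (hY : (P * PY).trace = b) (hZ : (P * PZ).trace = c)
    (x₁ x₂ x₃ : Bool) :
    (P * (sgn x₁ • PX + sgn x₂ • PY + sgn x₃ • PZ)).trace
      = sgn x₁ * a + sgn x₂ * b + sgn x₃ * c := by
  simp [Matrix.mul_add, Matrix.mul_smul, Matrix.trace_add, Matrix.trace_smul,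
    hX, hY, hZ, smul_eq_mul]

lemma trSsum (x₁ x₂ x₃ : Bool) :
    ((sgn x₁ • PX + sgn x₂ • PY + sgn x₃ • PZ)).trace = 0 := by
  simp [Matrix.trace_add, Matrix.trace_smul, trPX, trPY, trPZ]

theorem qrac31_success_probability (x₁ x₂ x₃ : Bool) :
    (meas PX x₁ * rho3 x₁ x₂ x₃).trace = ((1 : ℝ)/2 + 1/(2 * Real.sqrt 3) : ℝ) ∧
    (meas PY x₂ * rho3 x₁ x₂ x₃).trace = ((1 : ℝ)/2 + 1/(2 * Real.sqrt 3) : ℝ) ∧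
    (meas PZ x₃ * rho3 x₁ x₂ x₃).trace = ((1 : ℝ)/2 + 1/(2 * Real.sqrt 3) : ℝ) := by
  refine ⟨?_, ?_, ?_⟩
  · exact key PX _ (sgn x₁) (sgn_sq x₁) trPX (trSsum x₁ x₂ x₃)
      (by rw [trS PX 2 0 0 trXX trXY trXZ]; ring)
  · exact key PY _ (sgn x₂) (sgn_sq x₂) trPY (trSsum x₁ x₂ x₃)
      (by rw [trS PY 0 2 0 trYX trYY trYZ]; ring)
  · exact key PZ _ (sgn x₃) (sgn_sq x₃) trPZ (trSsum x₁ x₂ x₃)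
      (by rw [trS PZ 0 0 2 trZX trZY trZZ]; ring)
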